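/- Let C be a closed convex subset of a normed space containing 0, and suppose a family of linear maps Φ_s (s in a finite index set) each maps C into C. Then any convex combination Σ_s p_s Φ_s (p_s ≥ 0, Σ p_s = 1) maps C into C, and consequently for a generator ℒ = Σ_s γ_s (Φ_s − 𝟙) with γ_s ≥ 0, exp(tℒ) maps C into C for all t ≥ 0. -/

import Mathlib

open Filter Nat

/-- Sub-convex combinations (weights nonneg, sum ≤ 1) of points of a convex set
containing 0 stay in the set. -/
lemma subconv_mem {V : Type*} [NormedAddCommGroup V] [NormedSpace ℝ V]
    {C : Set V} (hCconv : Convex ℝ C) (hC0 : (0 : V) ∈ C)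
    {ι : Type*} (s : Finset ι) (w : ι → ℝ) (y : ι → V)
    (hw : ∀ i ∈ s, 0 ≤ w i) (hsum : ∑ i ∈ s, w i ≤ 1)
    (hy : ∀ i ∈ s, y i ∈ C) : ∑ i ∈ s, w i • y i ∈ C := by
  set W := ∑ i ∈ s, w i with hW
  have hW0 : 0 ≤ W := Finset.sum_nonneg hw
  rcases eq_or_lt_of_le hW0 with h0 | hpos
  · have : ∀ i ∈ s, w i = 0 := by
      intro i hi
      exact (Finset.sum_eq_zero_iff_of_nonneg hw).mp h0.symm i hi
    rw [Finset.sum_eq_zero fun i hi => by rw [this i hi, zero_smul]]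
    exact hC0
  · have hz : ∑ i ∈ s, (w i / W) • y i ∈ C := by
      apply hCconv.sum_mem
      · intro i hi; exact div_nonneg (hw i hi) hW0
      · rw [← Finset.sum_div]; field_simp; exact hW.symm
      · exact hy
    have h1 : ∑ i ∈ s, w i • y i = W • ∑ i ∈ s, (w i / W) • y i + (1 - W) • 0 := by
      rw [smul_zero, add_zero, Finset.smul_sum]
      refine Finset.sum_congr rfl fun i hi => ?_
      rw [smul_smul, mul_div_cancel₀ _ (ne_of_gt hpos)]
    rw [h1]
    exact hCconv hz hC0 hW0 (by linarith) (by ring)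

/-- If each linear map `Φ_s` preserves a closed convex set `C ∋ 0`, then any
convex combination `Σ_s p_s Φ_s` preserves `C`, and for `ℒ = Σ_s γ_s (Φ_s − 𝟙)` with
`γ_s ≥ 0`, `exp(tℒ)` preserves `C` for all `t ≥ 0`. -/
theorem stmt16 {V : Type*} [NormedAddCommGroup V] [NormedSpace ℝ V] [FiniteDimensional ℝ V]
    {m : ℕ} (C : Set V) (hCc : IsClosed C) (hCconv : Convex ℝ C) (hC0 : (0 : V) ∈ C)
    (Φ : Fin m → V →L[ℝ] V) (hΦ : ∀ s, ∀ x ∈ C, Φ s x ∈ C) :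
    (∀ p : Fin m → ℝ, (∀ s, 0 ≤ p s) → ∑ s, p s = 1 →
      ∀ x ∈ C, (∑ s, p s • Φ s) x ∈ C) ∧
    (∀ γ : Fin m → ℝ, (∀ s, 0 ≤ γ s) →
      ∀ L : V →L[ℝ] V, L = ∑ s, γ s • (Φ s - ContinuousLinearMap.id ℝ V) →
      ∀ t : ℝ, 0 ≤ t → ∀ x ∈ C, NormedSpace.exp (t • L) x ∈ C) := by
  haveI : CompleteSpace V := FiniteDimensional.complete ℝ V
  constructor
  · intro p hp hsum x hx
    have : (∑ s, p s • Φ s) x = ∑ s, p s • (Φ s x) := by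
      simp [ContinuousLinearMap.sum_apply]
    rw [this]
    exact hCconv.sum_mem (fun s _ => hp s) (by simpa using hsum) (fun s _ => hΦ s x hx)
  · intro γ hγ L hL t ht x hx
    set A : V →L[ℝ] V := ∑ s, γ s • Φ s with hA
    set Γ : ℝ := ∑ s, γ s with hΓ
    have hΓ0 : 0 ≤ Γ := Finset.sum_nonneg fun s _ => hγ s
    -- step lemma
    have step : ∀ y ∈ C, ∃ z ∈ C, A y = Γ • z := by
      intro y hy
      rcases eq_or_lt_of_le hΓ0 with h0 | hpos
      · refine ⟨0, hC0, ?_⟩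
        have hz : ∀ s ∈ Finset.univ, γ s = 0 :=
          (Finset.sum_eq_zero_iff_of_nonneg (fun s _ => hγ s)).mp h0.symm
        simp only [hA, ContinuousLinearMap.sum_apply, ContinuousLinearMap.coe_smul',
          Pi.smul_apply, smul_zero]
        exact Finset.sum_eq_zero fun s hs => by rw [hz s hs, zero_smul]
      · refine ⟨∑ s, (γ s / Γ) • Φ s y, ?_, ?_⟩
        · exact hCconv.sum_mem (fun s _ => div_nonneg (hγ s) hΓ0)
            (by rw [← Finset.sum_div]; field_simp; exact hΓ.symm) (fun s _ => hΦ s y hy)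
        · rw [Finset.smul_sum]
          simp only [hA, ContinuousLinearMap.sum_apply, ContinuousLinearMap.coe_smul',
            Pi.smul_apply]
          refine Finset.sum_congr rfl fun s _ => ?_
          rw [smul_smul, mul_div_cancel₀ _ (ne_of_gt hpos)]
    -- powers
    have pow : ∀ k : ℕ, ∃ y ∈ C, ((t • A) ^ k) x = ((t * Γ) ^ k) • y := by
      intro k
      induction k with
      | zero => exact ⟨x, hx, by simp⟩
      | succ k ih =>
        obtain ⟨y, hyC, hy⟩ := ih
        obtain ⟨z, hzC, hz⟩ := step y hyC
        refine ⟨z, hzC, ?_⟩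
        rw [show (t • A) ^ (k + 1) = (t • A) * (t • A) ^ k from pow_succ' _ _]
        have : ((t • A) * ((t • A) ^ k)) x = (t • A) (((t • A) ^ k) x) := rfl
        rw [this, hy]
        simp only [ContinuousLinearMap.coe_smul', Pi.smul_apply, map_smul]
        rw [hz, show (t * Γ) ^ (k + 1) = (t * Γ) * (t * Γ) ^ k from pow_succ' _ _,
          smul_smul, smul_smul]
        congr 1
        ring
    choose y hyC hy using pow
    -- decompose L
    have hLA : t • L = t • A + (-(t * Γ)) • (1 : V →L[ℝ] V) := by
      ext v
      have h1 : L v = A v - Γ • v := by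
        simp only [hL, hA, ContinuousLinearMap.sum_apply, ContinuousLinearMap.coe_smul',
          Pi.smul_apply, ContinuousLinearMap.sub_apply, ContinuousLinearMap.coe_id', id_eq,
          smul_sub]
        rw [Finset.sum_sub_distrib, hΓ, Finset.sum_smul]
      simp only [ContinuousLinearMap.add_apply, ContinuousLinearMap.coe_smul',
        Pi.smul_apply, ContinuousLinearMap.one_apply, h1]
      rw [smul_sub, neg_smul, ← sub_eq_add_neg, mul_smul]
    have halg : ((-(t * Γ)) • (1 : V →L[ℝ] V)) = algebraMap ℝ (V →L[ℝ] V) (-(t * Γ)) :=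
      (Algebra.algebraMap_eq_smul_one _).symm
    have hcomm : Commute (t • A) ((-(t * Γ)) • (1 : V →L[ℝ] V)) := by
      rw [halg]; exact (Algebra.commutes _ _).symm
    have hexp : NormedSpace.exp (t • L)
        = Real.exp (-(t * Γ)) • NormedSpace.exp (t • A) := by
      rw [hLA, NormedSpace.exp_add_of_commute_of_mem_ball (𝕂 := ℝ) hcomm
        ((NormedSpace.expSeries_radius_eq_top ℝ (V →L[ℝ] V)).symm ▸ edist_lt_top _ _)
        ((NormedSpace.expSeries_radius_eq_top ℝ (V →L[ℝ] V)).symm ▸ edist_lt_top _ _)]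
      rw [halg, ← NormedSpace.algebraMap_exp_comm, ← Real.exp_eq_exp_ℝ,
        Algebra.algebraMap_eq_smul_one, mul_smul_comm, mul_one]
    -- series for exp (t • A) applied to x
    have hsumm : Summable (fun n : ℕ => ((n ! : ℝ))⁻¹ • (t • A) ^ n) :=
      NormedSpace.expSeries_summable' (𝕂 := ℝ) (t • A)
    have happ : NormedSpace.exp (t • A) x
        = ∑' n : ℕ, ((n ! : ℝ))⁻¹ • (((t • A) ^ n) x) := by
      rw [NormedSpace.exp_eq_tsum ℝ]
      have h2 := (ContinuousLinearMap.apply ℝ V x).map_tsum hsumm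
      simpa using h2
    have hsumm2 : Summable (fun n : ℕ => ((n ! : ℝ))⁻¹ • (((t • A) ^ n) x)) := by
      have := (hsumm.hasSum.mapL (ContinuousLinearMap.apply ℝ V x)).summable
      simpa using this
    have hhs : HasSum (fun n : ℕ => ((n ! : ℝ))⁻¹ • (((t • A) ^ n) x))
        (NormedSpace.exp (t • A) x) := by
      rw [happ]; exact hsumm2.hasSum
    set c : ℝ := Real.exp (-(t * Γ)) with hc
    have hc0 : 0 ≤ c := (Real.exp_pos _).le
    have htend : Tendsto (fun N : ℕ => c • ∑ k ∈ Finset.range N,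
        ((k ! : ℝ))⁻¹ • (((t • A) ^ k) x)) atTop (nhds (c • NormedSpace.exp (t • A) x)) :=
      (hhs.tendsto_sum_nat).const_smul c
    have hmem : ∀ N : ℕ, c • ∑ k ∈ Finset.range N,
        ((k ! : ℝ))⁻¹ • (((t • A) ^ k) x) ∈ C := by
      intro N
      have hrw : c • ∑ k ∈ Finset.range N, ((k ! : ℝ))⁻¹ • (((t • A) ^ k) x)
          = ∑ k ∈ Finset.range N, (c * (((k ! : ℝ))⁻¹ * (t * Γ) ^ k)) • y k := by
        rw [Finset.smul_sum]
        refine Finset.sum_congr rfl fun k _ => ?_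
        rw [hy k, smul_smul, smul_smul, mul_assoc]
      rw [hrw]
      apply subconv_mem hCconv hC0
      · intro k _
        positivity
      · have hb : ∑ k ∈ Finset.range N, ((k ! : ℝ))⁻¹ * (t * Γ) ^ k ≤ Real.exp (t * Γ) := by
          have := Real.sum_le_exp_of_nonneg (mul_nonneg ht hΓ0) N
          refine le_trans (le_of_eq ?_) this
          refine Finset.sum_congr rfl fun k _ => ?_
          rw [div_eq_inv_mul]
        calc ∑ k ∈ Finset.range N, c * (((k ! : ℝ))⁻¹ * (t * Γ) ^ k)
            = c * ∑ k ∈ Finset.range N, ((k ! : ℝ))⁻¹ * (t * Γ) ^ k :=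
              (Finset.mul_sum _ _ _).symm
          _ ≤ c * Real.exp (t * Γ) := by
              exact mul_le_mul_of_nonneg_left hb hc0
          _ = 1 := by rw [hc, ← Real.exp_add]; simp
      · intro k _
        exact hyC k
    have hlim : NormedSpace.exp (t • L) x = c • NormedSpace.exp (t • A) x := by
      rw [hexp]; rfl
    rw [hlim]
    exact hCc.mem_of_tendsto htend (Filter.Eventually.of_forall hmem)
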